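/- Let g : (Fin n → ZMod 2) → ZMod 2 be any function and let a ≥ 0. Let σ be the permutation of (Fin n → ZMod 2) × ZMod 2 × (Fin a → ZMod 2) defined by σ(x, b, z) = (x, b + g(x), z), and let U be the corresponding permutation matrix on n + 1 + a qubits. Let X_O denote the Pauli X gate on the output qubit (the middle register), and let H_{IO} denote the tensor product of Hadamard gates on the n input qubits and the output qubit (and identity on the a ancilla qubits). Then ⟨0| X_O · H_{IO} · U · H_{IO} · X_O |0⟩ = gap(g) / 2^n. -/

import Mathlib

/-- `gap g` is the number of inputs on which `g` evaluates to `0` minus the number of inputs on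
which it evaluates to `1`. -/
def gap {T : Type*} [Fintype T] [DecidableEq T] (g : (T → ZMod 2) → ZMod 2) : ℤ :=
  ∑ x : T → ZMod 2, (-1 : ℤ) ^ (g x).val

/-- Basis states of `n + 1 + a` qubits: an `n`-qubit input register, a 1-qubit output register
and an `a`-qubit ancilla register. -/
abbrev QBasis (n a : ℕ) := (Fin n → ZMod 2) × ZMod 2 × (Fin a → ZMod 2)

/-- The permutation matrix of the permutation `(x, b, z) ↦ (x, b + g(x), z)`. -/
def permU (n a : ℕ) (g : (Fin n → ZMod 2) → ZMod 2) :
    Matrix (QBasis n a) (QBasis n a) ℂ :=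
  fun v w => if v = (w.1, w.2.1 + g w.1, w.2.2) then 1 else 0

/-- The Pauli X gate on the output (middle) register, identity elsewhere. -/
def XO (n a : ℕ) : Matrix (QBasis n a) (QBasis n a) ℂ :=
  fun v w => if v = (w.1, w.2.1 + 1, w.2.2) then 1 else 0

/-- Hadamard gates on the `n` input qubits and the output qubit, identity on the ancillas. -/
noncomputable def HIO (n a : ℕ) : Matrix (QBasis n a) (QBasis n a) ℂ :=
  fun v w =>
    if v.2.2 = w.2.2 then
      (-1 : ℂ) ^ (((∑ i, v.1 i * w.1 i) + v.2.1 * w.2.1 : ZMod 2)).val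
        / (Real.sqrt 2 : ℂ) ^ (n + 1)
    else 0

lemma neg_one_pow_add' (c d : ZMod 2) :
    (-1 : ℂ) ^ ((c + d).val) = (-1 : ℂ) ^ c.val * (-1 : ℂ) ^ d.val := by
  rcases (show ∀ x : ZMod 2, x = 0 ∨ x = 1 by decide) c with rfl | rfl <;>
    rcases (show ∀ x : ZMod 2, x = 0 ∨ x = 1 by decide) d with rfl | rfl <;>
    norm_num [show ZMod.val ((1:ZMod 2)+1) = 0 from by decide,
      show ZMod.val (2:ZMod 2) = 0 from by decide,
      show ZMod.val (1:ZMod 2) = 1 from by decide,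
      show ZMod.val (0:ZMod 2) = 0 from by decide]

/-- With `U` the permutation matrix of `σ(x,b,z) = (x, b + g(x), z)`, we have
`⟨0| X_O · H_IO · U · H_IO · X_O |0⟩ = gap(g) / 2^n`. -/
theorem gap_from_reversible_circuit (n a : ℕ) (g : (Fin n → ZMod 2) → ZMod 2) :
    (XO n a * HIO n a * permU n a g * HIO n a * XO n a)
        ((fun _ => 0), 0, (fun _ => 0)) ((fun _ => 0), 0, (fun _ => 0))
      = ((gap g : ℤ) : ℂ) / 2 ^ n := by
  classical
  set e0 : QBasis n a := ((fun _ => 0), 0, (fun _ => 0)) with he0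
  set e1 : QBasis n a := ((fun _ => 0), 1, (fun _ => 0)) with he1
  have hs2 : ((Real.sqrt 2 : ℂ) ^ (n + 1)) * ((Real.sqrt 2 : ℂ) ^ (n + 1))
      = 2 ^ (n + 1) := by
    rw [← pow_add]
    have h1 : ((Real.sqrt 2 : ℝ) : ℂ) ^ ((n+1) + (n+1)) =
        ((Real.sqrt 2 ^ ((n+1)+(n+1)) : ℝ) : ℂ) := by push_cast; ring
    rw [h1, show (n+1)+(n+1) = 2*(n+1) by ring, pow_mul,
      Real.sq_sqrt (by norm_num : (0:ℝ) ≤ 2)]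
    push_cast; ring
  have hXO : ∀ j : QBasis n a, XO n a j e0 = if j = e1 then 1 else 0 := by
    rintro ⟨x, b, z⟩
    simp only [XO, he0, he1, show (0:ZMod 2) + 1 = 1 from by decide]
  have hXO' : ∀ j : QBasis n a, XO n a e0 j = if j = e1 then 1 else 0 := by
    rintro ⟨x, b, z⟩
    simp only [XO, he0, he1]
    have hcond : (((fun _ => 0 : Fin n → ZMod 2), (0:ZMod 2), (fun _ => 0 : Fin a → ZMod 2))
          = (x, b + 1, z))
        ↔ ((x, b, z) = ((fun _ => 0 : Fin n → ZMod 2), (1:ZMod 2),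
            (fun _ => 0 : Fin a → ZMod 2))) := by
      simp only [Prod.mk.injEq]
      constructor
      · rintro ⟨h1, h2, h3⟩
        exact ⟨h1.symm, by revert h2; revert b; decide, h3.symm⟩
      · rintro ⟨h1, h2, h3⟩
        exact ⟨h1.symm, by revert h2; revert b; decide, h3.symm⟩
    simp only [hcond]
  have step1 : (XO n a * HIO n a * permU n a g * HIO n a * XO n a) e0 e0
      = (XO n a * HIO n a * permU n a g * HIO n a) e0 e1 := by
    rw [Matrix.mul_apply]
    simp_rw [hXO, mul_ite, mul_one, mul_zero]
    simp
  have step2 : (XO n a * HIO n a * permU n a g * HIO n a) e0 e1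
      = (HIO n a * permU n a g * HIO n a) e1 e1 := by
    rw [Matrix.mul_assoc (XO n a) (HIO n a) (permU n a g), Matrix.mul_assoc,
      Matrix.mul_apply]
    simp_rw [hXO', ite_mul, one_mul, zero_mul]
    simp [Matrix.mul_assoc]
  have step3 : (HIO n a * permU n a g * HIO n a) e1 e1
      = ∑ w : QBasis n a, HIO n a e1 (w.1, w.2.1 + g w.1, w.2.2) * HIO n a w e1 := by
    rw [Matrix.mul_apply]
    refine Finset.sum_congr rfl fun w _ => ?_
    rw [Matrix.mul_apply]
    congr 1
    rw [show (∑ j : QBasis n a, HIO n a e1 j * permU n a g j w)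
        = ∑ j : QBasis n a, if j = (w.1, w.2.1 + g w.1, w.2.2) then HIO n a e1 j else 0 by
      refine Finset.sum_congr rfl fun j _ => ?_
      simp [permU, mul_ite]]
    simp
  rw [step1, step2, step3]
  rw [Fintype.sum_prod_type]
  simp_rw [Fintype.sum_prod_type]
  have hterm : ∀ (x : Fin n → ZMod 2) (b : ZMod 2) (z : Fin a → ZMod 2),
      HIO n a e1 (x, b + g x, z) * HIO n a (x, b, z) e1
        = if (fun _ => 0 : Fin a → ZMod 2) = z then
            ((-1 : ℂ) ^ (g x).val) / 2 ^ (n + 1) else 0 := by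
    intro x b z
    simp only [HIO, he1]
    by_cases hz : (fun _ => 0 : Fin a → ZMod 2) = z
    · rw [if_pos hz, if_pos hz.symm, if_pos hz]
      have h0 : (∑ i, (0 : ZMod 2) * x i) = 0 := by simp
      have h0' : (∑ i, x i * (0 : ZMod 2)) = 0 := by simp
      rw [h0, h0']
      rw [show (0 : ZMod 2) + 1 * (b + g x) = b + g x by ring,
        show (0 : ZMod 2) + b * 1 = b by ring]
      rw [div_mul_div_comm, hs2, neg_one_pow_add']
      congr 1
      rw [show ((-1:ℂ)^b.val * (-1:ℂ)^(g x).val * (-1:ℂ)^b.val)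
          = ((-1:ℂ)^b.val * (-1:ℂ)^b.val) * (-1:ℂ)^(g x).val by ring,
        ← pow_add, Even.neg_one_pow ⟨b.val, rfl⟩, one_mul]
    · rw [if_neg hz, if_neg (fun h => hz h.symm)]
      simp [hz]
  simp_rw [hterm]
  simp only [Finset.sum_ite_eq, Finset.mem_univ, if_true]
  rw [gap]
  push_cast
  rw [Finset.sum_div]
  refine Finset.sum_congr rfl fun x _ => ?_
  rw [Finset.sum_const, Finset.card_univ, ZMod.card, nsmul_eq_mul]
  rw [pow_succ]
  push_cast
  field_simp
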